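/- Let Φ be a positive unital linear map, A a positive invertible operator with m·I ≤ A ≤ M·I for 0 < m ≤ M, and p ≥ 1. Then Φ(A^p) ≤ K(m,M,p) · Φ(A)^p, where K(m,M,p) is the generalized Kantorovich constant ((p−1)^{p−1}/p^p)·(M^p − m^p)^p/((M−m)(mM^p − Mm^p)^{p−1}). -/

import Mathlib

open scoped NNReal

/-- The generalized Kantorovich (Ky Fan–Furuta) constant
`K(m,M,p) = ((p-1)^{p-1}/p^p) · (M^p - m^p)^p / ((M-m)(m M^p - M m^p)^{p-1})`. -/
noncomputable def kantorovichConst (m M p : ℝ) : ℝ :=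
  ((p - 1) ^ (p - 1) / p ^ p) * (M ^ p - m ^ p) ^ p /
    ((M - m) * (m * M ^ p - M * m ^ p) ^ (p - 1))

/-- Chord inequality: on `[m, M]`, the convex function `t ^ p` lies below the chord. -/
private lemma kc_chord {m M p : ℝ} (hm : 0 < m) (hmM : m < M) (hp : 1 ≤ p)
    {t : ℝ} (ht : t ∈ Set.Icc m M) :
    t ^ p ≤ (M ^ p - m ^ p) / (M - m) * t + (M * m ^ p - m * M ^ p) / (M - m) := by
  obtain ⟨htm, htM⟩ := ht
  have hMm : 0 < M - m := sub_pos.2 hmM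
  have ha : (0:ℝ) ≤ (M - t) / (M - m) := div_nonneg (by linarith) hMm.le
  have hb : (0:ℝ) ≤ (t - m) / (M - m) := div_nonneg (by linarith) hMm.le
  have hab : (M - t) / (M - m) + (t - m) / (M - m) = 1 := by
    field_simp
    ring
  have key := (convexOn_rpow hp).2 (Set.mem_Ici.mpr hm.le)
    (Set.mem_Ici.mpr (hm.trans hmM).le) ha hb hab
  simp only [smul_eq_mul] at key
  have hx : (M - t) / (M - m) * m + (t - m) / (M - m) * M = t := by
    field_simp
    ring
  rw [hx] at key
  have heq : (M - t) / (M - m) * m ^ p + (t - m) / (M - m) * M ^ p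
      = (M ^ p - m ^ p) / (M - m) * t + (M * m ^ p - m * M ^ p) / (M - m) := by
    field_simp
    ring
  linarith [key]

/-- Tangent line inequality for the convex function `c * t ^ p`. -/
private lemma tangent_line {c t₀ t p : ℝ} (hc : 0 < c) (ht₀ : 0 < t₀) (ht : 0 ≤ t)
    (hp : 1 ≤ p) :
    c * t₀ ^ p + c * p * t₀ ^ (p - 1) * (t - t₀) ≤ c * t ^ p := by
  have hs : (-1 : ℝ) ≤ t / t₀ - 1 := by
    have : 0 ≤ t / t₀ := div_nonneg ht ht₀.le
    linarith
  have hb := one_add_mul_self_le_rpow_one_add hs hp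
  rw [show (1 : ℝ) + (t / t₀ - 1) = t / t₀ by ring] at hb
  have key := mul_le_mul_of_nonneg_left hb
    (by positivity : (0 : ℝ) ≤ c * t₀ ^ p)
  have h2 : c * t₀ ^ p * (t / t₀) ^ p = c * t ^ p := by
    rw [Real.div_rpow ht ht₀.le]
    have h0 : (t₀ : ℝ) ^ p ≠ 0 := by positivity
    field_simp
  have h3 : t₀ ^ (p - 1) = t₀ ^ p / t₀ := by
    rw [Real.rpow_sub ht₀, Real.rpow_one]
  have h4 : c * t₀ ^ p + c * p * t₀ ^ (p - 1) * (t - t₀)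
      = c * t₀ ^ p * (1 + p * (t / t₀ - 1)) := by
    rw [h3]; field_simp
  rw [h4]
  exact key.trans_eq h2

/-- The Kantorovich constant scaled power function dominates the chord line on `(0, ∞)`. -/
private lemma kc_tangent {m M p : ℝ} (hm : 0 < m) (hmM : m < M) (hp : 1 ≤ p)
    {t : ℝ} (ht : 0 < t) :
    (M ^ p - m ^ p) / (M - m) * t + (M * m ^ p - m * M ^ p) / (M - m)
      ≤ kantorovichConst m M p * t ^ p := by
  have hM : 0 < M := hm.trans hmM
  have hMm : 0 < M - m := sub_pos.2 hmM
  rcases eq_or_lt_of_le hp with hp1 | hp1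
  · -- p = 1
    subst hp1
    simp only [kantorovichConst, Real.rpow_one, sub_self, Real.rpow_zero]
    have : (M - m) / (M - m) * t + (M * m - m * M) / (M - m) = t := by
      field_simp
      ring
    rw [this]
    have : (1 : ℝ) / 1 * (M - m) / ((M - m) * 1) * t = t := by
      field_simp
    rw [this]
  · -- 1 < p
    have hp0 : 0 < p := lt_trans one_pos hp1
    have hpm1 : 0 < p - 1 := sub_pos.2 hp1
    have hE : 0 < M ^ p - m ^ p := sub_pos.2 (Real.rpow_lt_rpow hm.le hmM hp0)
    have hE1 : 0 < M ^ (p - 1) - m ^ (p - 1) :=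
      sub_pos.2 (Real.rpow_lt_rpow hm.le hmM hpm1)
    have hmp : m ^ p = m ^ (p - 1) * m := by
      have := Real.rpow_add_one hm.ne' (p - 1)
      rwa [sub_add_cancel] at this
    have hMp : M ^ p = M ^ (p - 1) * M := by
      have := Real.rpow_add_one hM.ne' (p - 1)
      rwa [sub_add_cancel] at this
    have hD : 0 < m * M ^ p - M * m ^ p := by
      rw [hmp, hMp]
      nlinarith [mul_pos (mul_pos hm hM) hE1]
    set t₀ := p * (m * M ^ p - M * m ^ p) / ((p - 1) * (M ^ p - m ^ p)) with ht₀def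
    have ht₀ : 0 < t₀ := div_pos (mul_pos hp0 hD) (mul_pos hpm1 hE)
    have ht₀p : (0 : ℝ) < t₀ ^ (p - 1) := Real.rpow_pos_of_pos ht₀ _
    set c := (M ^ p - m ^ p) / (M - m) / (p * t₀ ^ (p - 1)) with hcdef
    have hc : 0 < c := div_pos (div_pos hE hMm) (mul_pos hp0 ht₀p)
    have key := tangent_line hc ht₀ ht.le hp
    have ht₀pow : t₀ ^ p = t₀ ^ (p - 1) * t₀ := by
      have := Real.rpow_add_one ht₀.ne' (p - 1)
      rwa [sub_add_cancel] at this
    have idμ : c * p * t₀ ^ (p - 1) = (M ^ p - m ^ p) / (M - m) := by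
      rw [hcdef]
      field_simp
    have hA1 : c * t₀ ^ p - c * p * t₀ ^ (p - 1) * t₀
        = (M ^ p - m ^ p) / (M - m) * t₀ * (1 - p) / p := by
      rw [ht₀pow, hcdef]
      field_simp
    have idν : (M * m ^ p - m * M ^ p) / (M - m)
        = c * t₀ ^ p - c * p * t₀ ^ (p - 1) * t₀ := by
      rw [hA1, ht₀def]
      field_simp
      ring
    have hpow : t₀ ^ (p - 1)
        = p ^ (p - 1) * (m * M ^ p - M * m ^ p) ^ (p - 1)
          / ((p - 1) ^ (p - 1) * (M ^ p - m ^ p) ^ (p - 1)) := by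
      rw [ht₀def, Real.div_rpow (by positivity) (by positivity),
        Real.mul_rpow (by positivity) (by positivity),
        Real.mul_rpow (by positivity) (by positivity)]
    have hEp : (M ^ p - m ^ p) ^ p = (M ^ p - m ^ p) ^ (p - 1) * (M ^ p - m ^ p) := by
      have := Real.rpow_add_one hE.ne' (p - 1)
      rwa [sub_add_cancel] at this
    have hpp : p ^ p = p ^ (p - 1) * p := by
      have := Real.rpow_add_one hp0.ne' (p - 1)
      rwa [sub_add_cancel] at this
    have idK : c = kantorovichConst m M p := by
      rw [hcdef, hpow, kantorovichConst, hEp, hpp]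
      have h1 : (0 : ℝ) < p ^ (p - 1) := Real.rpow_pos_of_pos hp0 _
      have h2 : (0 : ℝ) < (m * M ^ p - M * m ^ p) ^ (p - 1) := Real.rpow_pos_of_pos hD _
      have h3 : (0 : ℝ) < (p - 1) ^ (p - 1) := Real.rpow_pos_of_pos hpm1 _
      have h4 : (0 : ℝ) < (M ^ p - m ^ p) ^ (p - 1) := Real.rpow_pos_of_pos hE _
      field_simp
    calc (M ^ p - m ^ p) / (M - m) * t + (M * m ^ p - m * M ^ p) / (M - m)
        = c * t₀ ^ p + c * p * t₀ ^ (p - 1) * (t - t₀) := by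
          rw [← idμ, idν]; ring
      _ ≤ c * t ^ p := key
      _ = kantorovichConst m M p * t ^ p := by rw [idK]

section OperatorLemmas

variable {E : Type*} [NormedAddCommGroup E] [InnerProductSpace ℂ E] [CompleteSpace E]

private lemma spec_mem_Icc {a : E →L[ℂ] E} {m M : ℝ} (ha : 0 ≤ a)
    (h1 : m • (1 : E →L[ℂ] E) ≤ a) (h2 : a ≤ M • (1 : E →L[ℂ] E)) :
    spectrum ℝ a ⊆ Set.Icc m M := by
  have hsa : IsSelfAdjoint a := .of_nonneg ha
  intro x hx
  refine ⟨(algebraMap_le_iff_le_spectrum hsa).mp ?_ x hx,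
    (le_algebraMap_iff_spectrum_le hsa).mp ?_ x hx⟩
  · rwa [Algebra.algebraMap_eq_smul_one]
  · rwa [Algebra.algebraMap_eq_smul_one]

private lemma contOn_rpow {s : Set ℝ} {m M : ℝ} (hm : 0 < m) (hs : s ⊆ Set.Icc m M) (p : ℝ) :
    ContinuousOn (fun x : ℝ => x ^ p) s := fun x hx =>
  (Real.continuousAt_rpow_const x p
    (Or.inl (lt_of_lt_of_le hm (hs hx).1).ne')).continuousWithinAt

private lemma rpow_eq_cfc_real {a : E →L[ℂ] E} {m M : ℝ} (hm : 0 < m) (ha : 0 ≤ a)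
    (hspec : spectrum ℝ a ⊆ Set.Icc m M) (p : ℝ) :
    a ^ p = cfc (fun x : ℝ => x ^ p) a := by
  rw [CFC.rpow_def, cfc_nnreal_eq_real _ a ha]
  apply cfc_congr
  intro x hx
  have hx0 : 0 < x := lt_of_lt_of_le hm (hspec hx).1
  simp only [NNReal.coe_rpow, Real.coe_toNNReal x hx0.le]

private lemma cfc_affine {a : E →L[ℂ] E} (ha : IsSelfAdjoint a) (c d : ℝ) :
    cfc (fun x : ℝ => c * x + d) a = c • a + d • 1 := by
  have h1 : cfc (fun x : ℝ => c * x + d) a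
      = cfc (fun x : ℝ => c * x) a + cfc (fun _ : ℝ => d) a :=
    cfc_add a (fun x => c * x) (fun _ => d) (by fun_prop) (by fun_prop)
  rw [h1, cfc_const d a ha, Algebra.algebraMap_eq_smul_one]
  congr 1
  have h2 : cfc (fun x : ℝ => c * x) a = c • cfc (fun x : ℝ => x) a :=
    cfc_const_mul c (fun x => x) a (by fun_prop)
  rw [h2, cfc_id' ℝ a ha]

end OperatorLemmas

/-- For a positive unital linear map `Φ`, a positive invertible operator `A` with
`m • 1 ≤ A ≤ M • 1`, `0 < m < M`, and real `p ≥ 1`,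
`Φ(A^p) ≤ K(m,M,p) • Φ(A)^p`. -/
theorem map_rpow_le_kantorovich_rpow_map
    {H K : Type*} [NormedAddCommGroup H] [InnerProductSpace ℂ H] [CompleteSpace H]
    [NormedAddCommGroup K] [InnerProductSpace ℂ K] [CompleteSpace K]
    (Φ : (H →L[ℂ] H) →ₗ[ℂ] (K →L[ℂ] K))
    (hΦ1 : Φ 1 = 1) (hΦpos : ∀ a : H →L[ℂ] H, 0 ≤ a → 0 ≤ Φ a)
    (A : H →L[ℂ] H) (hA : 0 ≤ A) (hinv : Invertible A)
    (m M : ℝ) (hm : 0 < m) (hmM : m < M)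
    (h1 : m • (1 : H →L[ℂ] H) ≤ A) (h2 : A ≤ M • (1 : H →L[ℂ] H))
    (p : ℝ) (hp : 1 ≤ p) :
    Φ (A ^ p) ≤ kantorovichConst m M p • (Φ A) ^ p := by
  have hmono : ∀ x y : H →L[ℂ] H, x ≤ y → Φ x ≤ Φ y := by
    intro x y hxy
    have h := hΦpos (y - x) (sub_nonneg.2 hxy)
    rw [map_sub] at h
    exact sub_nonneg.1 h
  have hΦsmul : ∀ (r : ℝ) (x : H →L[ℂ] H), Φ (r • x) = r • Φ x := by
    intro r x
    rw [← algebraMap_smul ℂ r x, map_smul, algebraMap_smul]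
  have hspecA := spec_mem_Icc hA h1 h2
  have hB0 : 0 ≤ Φ A := hΦpos A hA
  have hB1 : m • (1 : K →L[ℂ] K) ≤ Φ A := by
    have h := hmono _ _ h1
    rwa [hΦsmul, hΦ1] at h
  have hB2 : Φ A ≤ M • (1 : K →L[ℂ] K) := by
    have h := hmono _ _ h2
    rwa [hΦsmul, hΦ1] at h
  have hspecB := spec_mem_Icc hB0 hB1 hB2
  have hsaA : IsSelfAdjoint A := .of_nonneg hA
  have hsaB : IsSelfAdjoint (Φ A) := .of_nonneg hB0
  set μ : ℝ := (M ^ p - m ^ p) / (M - m) with hμ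
  set ν : ℝ := (M * m ^ p - m * M ^ p) / (M - m) with hν
  have step1 : A ^ p ≤ μ • A + ν • 1 := by
    rw [rpow_eq_cfc_real hm hA hspecA p, ← cfc_affine hsaA μ ν]
    exact cfc_mono (fun x hx => kc_chord hm hmM hp (hspecA hx))
      (contOn_rpow hm hspecA p) (by fun_prop)
  have step2 : Φ (A ^ p) ≤ μ • Φ A + ν • 1 := by
    have h := hmono _ _ step1
    rwa [map_add, hΦsmul, hΦsmul, hΦ1] at h
  have step3 : μ • Φ A + ν • 1 ≤ kantorovichConst m M p • (Φ A) ^ p := by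
    rw [rpow_eq_cfc_real hm hB0 hspecB p,
      ← cfc_const_mul (kantorovichConst m M p) (fun x : ℝ => x ^ p) (Φ A)
        (contOn_rpow hm hspecB p),
      ← cfc_affine hsaB μ ν]
    exact cfc_mono
      (fun x hx => kc_tangent hm hmM hp (lt_of_lt_of_le hm (hspecB hx).1))
      (by fun_prop)
      (fun x hx => ((Real.continuousAt_rpow_const x p
        (Or.inl (lt_of_lt_of_le hm (hspecB hx).1).ne')).const_smul
          (kantorovichConst m M p)).continuousWithinAt)
  exact step2.trans step3
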